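/- Let {Y_n}_{n≥1} be i.i.d. real random variables with common distribution function F having no atom at its essential supremum (there is no x_0 with F(x_0−) < F(x_0) = 1), M_n = max(Y_1,...,Y_n), and let {b_n} be a non-decreasing real sequence. Then P(M_n > b_n for all sufficiently large n) is either 0 or 1. -/

import Mathlib

open MeasureTheory ProbabilityTheory Filter Set

section Aux

variable {Ω : Type*} [MeasurableSpace Ω] (P : Measure Ω) [IsProbabilityMeasure P]
variable (F : ℝ → ℝ) (Y : ℕ → Ω → ℝ)

lemma aux_F_le_one (hdf : ∀ x, (P {ω | Y 0 ω ≤ x}).toReal = F x) (x : ℝ) : F x ≤ 1 := by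
  rw [← hdf]
  have h1 : P {ω | Y 0 ω ≤ x} ≤ 1 := prob_le_one
  calc (P {ω | Y 0 ω ≤ x}).toReal ≤ (1 : ENNReal).toReal :=
        ENNReal.toReal_mono ENNReal.one_ne_top h1
    _ = 1 := by simp

lemma aux_toReal_one {s : Set Ω} (h : (P s).toReal = 1) : P s = 1 := by
  have h1 : P s ≠ ⊤ := measure_ne_top P s
  rw [← ENNReal.toReal_one] at h
  exact (ENNReal.toReal_eq_toReal_iff' h1 ENNReal.one_ne_top).1 h

lemma aux_exists_rat (hFmono : Monotone F) (hY0 : Measurable (Y 0))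
    (hdf : ∀ x, (P {ω | Y 0 ω ≤ x}).toReal = F x)
    {x : ℝ} (hx : F x < 1) : ∃ q : ℚ, x < (q : ℝ) ∧ F q < 1 := by
  by_contra h
  push_neg at h
  have hF1 : ∀ y : ℝ, x < y → F y = 1 := by
    intro y hy
    obtain ⟨q, hq1, hq2⟩ := exists_rat_btwn hy
    have h2 := h q hq1
    have h3 := aux_F_le_one P F Y hdf y
    have h4 := hFmono hq2.le
    linarith
  have hanti : Antitone fun n : ℕ => {ω | Y 0 ω ≤ x + 1 / (n + 1)} := by
    intro a b hab ω hω
    simp only [mem_setOf_eq] at *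
    have hba : (1 : ℝ) / (b + 1) ≤ 1 / (a + 1) := by
      apply one_div_le_one_div_of_le
      · positivity
      · exact_mod_cast Nat.succ_le_succ hab
    linarith
  have hset : ⋂ n : ℕ, {ω | Y 0 ω ≤ x + 1 / (n + 1)} = {ω | Y 0 ω ≤ x} := by
    ext ω
    simp only [mem_iInter, mem_setOf_eq]
    constructor
    · intro hω
      refine le_of_forall_pos_le_add fun ε hε => ?_
      obtain ⟨n, hn⟩ := exists_nat_one_div_lt hε
      have := hω n
      push_cast at this hn ⊢
      linarith
    · intro hω n
      have : (0 : ℝ) < 1 / (n + 1) := by positivity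
      linarith
  have hmeas := hanti.measure_iInter (μ := P)
    (fun n => (hY0 measurableSet_Iic).nullMeasurableSet)
    ⟨0, measure_ne_top P _⟩
  rw [hset] at hmeas
  have hone : ∀ n : ℕ, P {ω | Y 0 ω ≤ x + 1 / (n + 1)} = 1 := by
    intro n
    apply aux_toReal_one
    rw [hdf]
    have : (0:ℝ) < 1 / ((n:ℝ) + 1) := by positivity
    exact hF1 _ (by linarith)
  simp only [hone, iInf_const] at hmeas
  have : F x = 1 := by rw [← hdf, hmeas]; simp
  linarith

lemma aux_exists_lt_one (hY0 : Measurable (Y 0)) (hdf : ∀ x, (P {ω | Y 0 ω ≤ x}).toReal = F x) :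
    ∃ c : ℝ, F c < 1 := by
  by_contra h
  push_neg at h
  have hF1 : ∀ c : ℝ, F c = 1 := fun c => le_antisymm (aux_F_le_one P F Y hdf c) (h c)
  have hanti : Antitone fun n : ℕ => {ω | Y 0 ω ≤ -(n : ℝ)} := by
    intro a b hab ω hω
    simp only [mem_setOf_eq] at *
    have : (a : ℝ) ≤ b := by exact_mod_cast hab
    linarith
  have hset : ⋂ n : ℕ, {ω | Y 0 ω ≤ -(n : ℝ)} = (∅ : Set Ω) := by
    ext ω
    simp only [mem_iInter, mem_setOf_eq, mem_empty_iff_false, iff_false, not_forall]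
    obtain ⟨n, hn⟩ := exists_nat_gt (-(Y 0 ω))
    exact ⟨n, by push_neg; linarith⟩
  have hmeas := hanti.measure_iInter (μ := P)
    (fun n => (hY0 measurableSet_Iic).nullMeasurableSet)
    ⟨0, measure_ne_top P _⟩
  rw [hset] at hmeas
  have hone : ∀ n : ℕ, P {ω | Y 0 ω ≤ -(n : ℝ)} = 1 := by
    intro n
    apply aux_toReal_one
    rw [hdf]
    exact hF1 _
  simp only [hone, iInf_const, measure_empty] at hmeas
  exact zero_ne_one hmeas

end Aux
section Aux2

variable {Ω : Type*} [MeasurableSpace Ω] (P : Measure Ω) [IsProbabilityMeasure P]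
variable (F : ℝ → ℝ) (Y : ℕ → Ω → ℝ)

lemma aux_leftLim (hFmono : Monotone F) (hY0 : Measurable (Y 0))
    (hdf : ∀ x, (P {ω | Y 0 ω ≤ x}).toReal = F x) (x : ℝ) :
    (P {ω | Y 0 ω < x}).toReal = Function.leftLim F x := by
  have hmono : Monotone fun n : ℕ => {ω | Y 0 ω ≤ x - 1 / (n + 1)} := by
    intro a b hab ω hω
    simp only [mem_setOf_eq] at *
    have hba : (1 : ℝ) / (b + 1) ≤ 1 / (a + 1) := by
      apply one_div_le_one_div_of_le
      · positivity
      · exact_mod_cast Nat.succ_le_succ hab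
    linarith
  have hset : ⋃ n : ℕ, {ω | Y 0 ω ≤ x - 1 / (n + 1)} = {ω | Y 0 ω < x} := by
    ext ω
    simp only [mem_iUnion, mem_setOf_eq]
    constructor
    · rintro ⟨n, hn⟩
      have : (0 : ℝ) < 1 / ((n : ℝ) + 1) := by positivity
      linarith
    · intro hω
      obtain ⟨n, hn⟩ := exists_nat_one_div_lt (sub_pos.2 hω)
      exact ⟨n, by push_cast at hn ⊢; linarith⟩
  have htend := tendsto_measure_iUnion_atTop (μ := P) hmono
  rw [hset] at htend
  have htoReal : Filter.Tendsto (fun n : ℕ => (P {ω | Y 0 ω ≤ x - 1 / (n + 1)}).toReal)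
      atTop (nhds ((P {ω | Y 0 ω < x}).toReal)) :=
    (ENNReal.tendsto_toReal (measure_ne_top P _)).comp htend
  have htendF : Filter.Tendsto (fun n : ℕ => F (x - 1 / (n + 1)))
      atTop (nhds (Function.leftLim F x)) := by
    apply (hFmono.tendsto_leftLim x).comp
    rw [tendsto_nhdsWithin_iff]
    constructor
    · have h0 : Filter.Tendsto (fun n : ℕ => 1 / ((n : ℝ) + 1)) atTop (nhds 0) :=
        tendsto_one_div_add_atTop_nhds_zero_nat
      have := (tendsto_const_nhds (x := x) (f := atTop (α := ℕ))).sub h0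
      simpa using this
    · filter_upwards with n
      have : (0 : ℝ) < 1 / ((n : ℝ) + 1) := by positivity
      simp only [mem_Iio]
      linarith
  have := htoReal
  simp only [hdf] at this
  exact tendsto_nhds_unique this htendF

lemma aux_S_zero (hFmono : Monotone F) (hY : ∀ n, Measurable (Y n))
    (hident : ∀ n, P.map (Y n) = P.map (Y 0))
    (hdf : ∀ x, (P {ω | Y 0 ω ≤ x}).toReal = F x)
    (hnoatom : ∀ x, F x = 1 → Function.leftLim F x = 1) (k : ℕ) :
    P {ω | F (Y k ω) = 1} = 0 := by
  by_cases hS : {x : ℝ | F x = 1}.Nonempty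
  · obtain ⟨c, hc⟩ := aux_exists_lt_one P F Y (hY 0) hdf
    have hbdd : BddBelow {x : ℝ | F x = 1} := by
      refine ⟨c, fun s hs => ?_⟩
      by_contra h
      push_neg at h
      have := hFmono h.le
      rw [hs] at this
      linarith
    set x₀ := sInf {x : ℝ | F x = 1} with hx₀
    have hFx₀ : F x₀ = 1 := by
      by_contra h
      have hlt : F x₀ < 1 := lt_of_le_of_ne (aux_F_le_one P F Y hdf x₀) h
      obtain ⟨q, hq1, hq2⟩ := aux_exists_rat P F Y hFmono (hY 0) hdf hlt
      have hqlb : (q : ℝ) ∈ lowerBounds {x : ℝ | F x = 1} := by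
        intro s hs
        by_contra hcon
        push_neg at hcon
        have := hFmono hcon.le
        rw [hs] at this
        linarith
      have := le_csInf hS hqlb
      rw [← hx₀] at this
      linarith
    have hSeq : {x : ℝ | F x = 1} = Ici x₀ := by
      ext y
      simp only [mem_setOf_eq, mem_Ici]
      constructor
      · intro hy
        exact csInf_le hbdd hy
      · intro hy
        have h1 := hFmono hy
        rw [hFx₀] at h1
        exact le_antisymm (aux_F_le_one P F Y hdf y) h1
    have hLL : Function.leftLim F x₀ = 1 := hnoatom x₀ hFx₀
    have hlt1 : P {ω | Y 0 ω < x₀} = 1 := by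
      apply aux_toReal_one
      rw [aux_leftLim P F Y hFmono (hY 0) hdf x₀, hLL]
    have hIci0 : P (Y 0 ⁻¹' Ici x₀) = 0 := by
      have hcompl : Y 0 ⁻¹' Ici x₀ = {ω | Y 0 ω < x₀}ᶜ := by
        ext ω; simp [not_lt]
      have hms : MeasurableSet {ω | Y 0 ω < x₀} := hY 0 measurableSet_Iio
      rw [hcompl, measure_compl hms (measure_ne_top P _), hlt1, measure_univ, tsub_self]
    have hkey : {ω | F (Y k ω) = 1} = Y k ⁻¹' Ici x₀ := by
      ext ω
      have := hSeq
      constructor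
      · intro h
        have : Y k ω ∈ {x : ℝ | F x = 1} := h
        rwa [hSeq] at this
      · intro h
        have : Y k ω ∈ Ici x₀ := h
        rw [← hSeq] at this
        exact this
    rw [hkey, ← Measure.map_apply (hY k) measurableSet_Ici, hident k,
      Measure.map_apply (hY 0) measurableSet_Ici]
    exact hIci0
  · have : {ω | F (Y k ω) = 1} = ∅ := by
      ext ω
      simp only [mem_setOf_eq, mem_empty_iff_false, iff_false]
      intro h
      exact hS ⟨Y k ω, h⟩
    rw [this, measure_empty]

end Aux2
section Aux3

variable {Ω : Type*} [MeasurableSpace Ω] (P : Measure Ω) [IsProbabilityMeasure P]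
variable (F : ℝ → ℝ) (Y : ℕ → Ω → ℝ)

lemma aux_all_le (hY : ∀ n, Measurable (Y n))
    (hindep : iIndepFun Y P)
    (hident : ∀ n, P.map (Y n) = P.map (Y 0))
    (hdf : ∀ x, (P {ω | Y 0 ω ≤ x}).toReal = F x)
    {q : ℝ} (hq : F q < 1) : P {ω | ∀ j, Y j ω ≤ q} = 0 := by
  set c := P (Y 0 ⁻¹' Iic q) with hc
  have hceq : ∀ j, P (Y j ⁻¹' Iic q) = c := by
    intro j
    rw [← Measure.map_apply (hY j) measurableSet_Iic, hident j,
      Measure.map_apply (hY 0) measurableSet_Iic]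
  have hclt : c < 1 := by
    rcases lt_or_ge c 1 with h | h
    · exact h
    · exfalso
      have h1 : c = 1 := le_antisymm prob_le_one h
      have : (P {ω | Y 0 ω ≤ q}).toReal = 1 := by
        have : {ω | Y 0 ω ≤ q} = Y 0 ⁻¹' Iic q := rfl
        rw [this, ← hc, h1, ENNReal.toReal_one]
      rw [hdf] at this
      linarith
  have hle : ∀ n : ℕ, P {ω | ∀ j, Y j ω ≤ q} ≤ c ^ n := by
    intro n
    have hsub : {ω | ∀ j, Y j ω ≤ q} ⊆ ⋂ j ∈ Finset.range n, Y j ⁻¹' Iic q := by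
      intro ω hω
      simp only [mem_iInter, mem_preimage, mem_Iic]
      exact fun j _ => hω j
    calc P {ω | ∀ j, Y j ω ≤ q} ≤ P (⋂ j ∈ Finset.range n, Y j ⁻¹' Iic q) :=
          measure_mono hsub
      _ = ∏ j ∈ Finset.range n, P (Y j ⁻¹' Iic q) :=
          hindep.measure_inter_preimage_eq_mul (Finset.range n)
            (fun i _ => measurableSet_Iic)
      _ = c ^ n := by
          simp only [hceq, Finset.prod_const, Finset.card_range]
  have htend : Filter.Tendsto (fun n : ℕ => c ^ n) atTop (nhds 0) :=
    ENNReal.tendsto_pow_atTop_nhds_zero_of_lt_one hclt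
  have := ge_of_tendsto' htend hle
  exact le_antisymm this zero_le

lemma aux_record (hFmono : Monotone F) (hY : ∀ n, Measurable (Y n))
    (hindep : iIndepFun Y P)
    (hident : ∀ n, P.map (Y n) = P.map (Y 0))
    (hdf : ∀ x, (P {ω | Y 0 ω ≤ x}).toReal = F x)
    (hnoatom : ∀ x, F x = 1 → Function.leftLim F x = 1) :
    P {ω | ∃ k, ∀ j, Y j ω ≤ Y k ω} = 0 := by
  have hsub : {ω | ∃ k, ∀ j, Y j ω ≤ Y k ω} ⊆
      (⋃ k, {ω | F (Y k ω) = 1}) ∪ ⋃ q : ℚ, {ω | F q < 1 ∧ ∀ j, Y j ω ≤ q} := by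
    rintro ω ⟨k, hk⟩
    by_cases h1 : F (Y k ω) = 1
    · exact Or.inl (mem_iUnion.2 ⟨k, h1⟩)
    · right
      have hlt : F (Y k ω) < 1 := lt_of_le_of_ne (aux_F_le_one P F Y hdf _) h1
      obtain ⟨q, hq1, hq2⟩ := aux_exists_rat P F Y hFmono (hY 0) hdf hlt
      exact mem_iUnion.2 ⟨q, hq2, fun j => (hk j).trans hq1.le⟩
  refine measure_mono_null hsub (measure_union_null ?_ ?_)
  · exact measure_iUnion_null fun k =>
      aux_S_zero P F Y hFmono hY hident hdf hnoatom k
  · refine measure_iUnion_null fun q => ?_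
    by_cases hq : F q < 1
    · exact measure_mono_null (fun ω hω => hω.2)
        (aux_all_le P F Y hY hindep hident hdf hq)
    · have : {ω | F (q : ℝ) < 1 ∧ ∀ j, Y j ω ≤ q} = ∅ := by
        ext ω; simp only [mem_setOf_eq, mem_empty_iff_false, iff_false]
        exact fun h => hq h.1
      rw [this, measure_empty]

end Aux3
/-- 0–1 law: for i.i.d. `Y n` whose distribution function `F` has no atom at its
essential supremum (no `x` with `F(x−) < F(x) = 1`) and a non-decreasing boundary
`b n`, the probability that eventually `M n > b n` is either 0 or 1. -/
theorem max_crossing_zero_one_law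
    {Ω : Type*} [MeasurableSpace Ω] (P : Measure Ω) [IsProbabilityMeasure P]
    (F : ℝ → ℝ) (hFmono : Monotone F)
    (Y : ℕ → Ω → ℝ) (hY : ∀ n, Measurable (Y n))
    (hindep : iIndepFun Y P)
    (hident : ∀ n, P.map (Y n) = P.map (Y 0))
    (hdf : ∀ x, (P {ω | Y 0 ω ≤ x}).toReal = F x)
    (hnoatom : ∀ x, F x = 1 → Function.leftLim F x = 1)
    (b : ℕ → ℝ) (hb : Monotone b) :
    P {ω | ∀ᶠ n in atTop,
        b n < (Finset.range (n + 1)).sup' (by simp) fun k => Y k ω} = 0 ∨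
    P {ω | ∀ᶠ n in atTop,
        b n < (Finset.range (n + 1)).sup' (by simp) fun k => Y k ω} = 1 := by
  set A : Set Ω := {ω | ∀ᶠ n in atTop,
      b n < (Finset.range (n + 1)).sup' (by simp) fun k => Y k ω} with hAdef
  -- tail approximating sets
  set B : ℕ → Set Ω := fun m =>
    {ω | ∀ᶠ n in atTop, ∃ j, m ≤ j ∧ j ≤ n ∧ b n < Y j ω} with hBdef
  set T : Set Ω := ⋂ m, B m with hTdef
  set s : ℕ → MeasurableSpace Ω :=
    fun n => MeasurableSpace.comap (Y n) Real.measurableSpace with hsdef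
  have hle : ∀ n, s n ≤ ‹MeasurableSpace Ω› := fun n => (hY n).comap_le
  -- antitone
  have hBanti : ∀ {m m' : ℕ}, m ≤ m' → B m' ⊆ B m := by
    intro m m' hmm' ω hω
    filter_upwards [hω] with n hn
    obtain ⟨j, hj1, hj2, hj3⟩ := hn
    exact ⟨j, hmm'.trans hj1, hj2, hj3⟩
  -- measurability of B m wrt ⨆ k ≥ m, s k
  have hBmeas : ∀ m, MeasurableSet[⨆ k, ⨆ (_ : m ≤ k), s k] (B m) := by
    intro m
    have hC : ∀ n, MeasurableSet[⨆ k, ⨆ (_ : m ≤ k), s k]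
        {ω | ∃ j, m ≤ j ∧ j ≤ n ∧ b n < Y j ω} := by
      intro n
      have : {ω | ∃ j, m ≤ j ∧ j ≤ n ∧ b n < Y j ω}
          = ⋃ j, ⋃ (_ : m ≤ j ∧ j ≤ n), Y j ⁻¹' Ioi (b n) := by
        ext ω
        simp only [mem_setOf_eq, mem_iUnion, mem_preimage, mem_Ioi]
        constructor
        · rintro ⟨j, h1, h2, h3⟩; exact ⟨j, ⟨h1, h2⟩, h3⟩
        · rintro ⟨j, ⟨h1, h2⟩, h3⟩; exact ⟨j, h1, h2, h3⟩
      rw [this]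
      refine MeasurableSet.iUnion fun j => MeasurableSet.iUnion fun hj => ?_
      have hsj : s j ≤ ⨆ k, ⨆ (_ : m ≤ k), s k :=
        le_iSup₂ (f := fun k (_ : m ≤ k) => s k) j hj.1
      exact hsj _ ⟨Ioi (b n), measurableSet_Ioi, rfl⟩
    have hBeq : B m = ⋃ N, ⋂ n, ⋂ (_ : N ≤ n),
        {ω | ∃ j, m ≤ j ∧ j ≤ n ∧ b n < Y j ω} := by
      ext ω
      simp only [hBdef, mem_setOf_eq, eventually_atTop, mem_iUnion, mem_iInter]
    rw [hBeq]
    exact MeasurableSet.iUnion fun N => MeasurableSet.iInter fun n =>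
      MeasurableSet.iInter fun _ => hC n
  -- T is tail-measurable
  have hTtail : MeasurableSet[Filter.limsup s atTop] T := by
    rw [limsup_eq_iInf_iSup_of_nat, MeasurableSpace.measurableSet_iInf]
    intro N
    have hTeq : T = ⋂ m, B (N + m) := by
      apply Subset.antisymm
      · exact fun ω hω => mem_iInter.2 fun m => (mem_iInter.1 hω) (N + m)
      · intro ω hω
        refine mem_iInter.2 fun m => ?_
        exact hBanti (Nat.le_add_left m N) ((mem_iInter.1 hω) m)
    rw [hTeq]
    refine MeasurableSet.iInter fun m => ?_
    have hmono : (⨆ k, ⨆ (_ : N + m ≤ k), s k) ≤ ⨆ k, ⨆ (_ : N ≤ k), s k :=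
      biSup_mono fun k hk => (Nat.le_add_right N m).trans hk
    exact hmono _ (hBmeas (N + m))
  -- T ⊆ A
  have hTA : T ⊆ A := by
    intro ω hω
    have h0 : ω ∈ B 0 := (mem_iInter.1 hω) 0
    filter_upwards [h0] with n hn
    obtain ⟨j, _, hj2, hj3⟩ := hn
    have hjmem : j ∈ Finset.range (n + 1) := Finset.mem_range.2 (Nat.lt_succ_of_le hj2)
    exact lt_of_lt_of_le hj3 (Finset.le_sup' (fun k => Y k ω) hjmem)
  -- no-record set
  set Nrec : Set Ω := {ω | ∃ k, ∀ j, Y j ω ≤ Y k ω} with hNdef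
  -- A \ T ⊆ Nrec
  have hAT : A \ T ⊆ Nrec := by
    intro ω ⟨hA, hT⟩
    by_contra hN
    apply hT
    simp only [hNdef, mem_setOf_eq, not_exists, not_forall, not_le] at hN
    refine mem_iInter.2 fun m => ?_
    -- find j exceeding the max over range (m+1)
    obtain ⟨k0, hk0mem, hk0⟩ :=
      Finset.exists_mem_eq_sup' (s := Finset.range (m + 1)) (by simp) (fun k => Y k ω)
    obtain ⟨j, hj⟩ := hN k0
    have hjgt : ∀ i ∈ Finset.range (m + 1), Y i ω < Y j ω := by
      intro i hi
      calc Y i ω ≤ (Finset.range (m + 1)).sup' (by simp) (fun k => Y k ω) :=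
            Finset.le_sup' (fun k => Y k ω) hi
        _ = Y k0 ω := hk0
        _ < Y j ω := hj
    filter_upwards [hA, eventually_ge_atTop j] with n h1 h2
    obtain ⟨k', hk'mem, hk'⟩ :=
      Finset.exists_mem_eq_sup' (s := Finset.range (n + 1)) (by simp) (fun k => Y k ω)
    have hbk' : b n < Y k' ω := by rwa [hk'] at h1
    have hk'n : k' ≤ n := Nat.lt_succ_iff.1 (Finset.mem_range.1 hk'mem)
    have hmk' : m ≤ k' := by
      by_contra h
      push_neg at h
      have hk'small : k' ∈ Finset.range (m + 1) := Finset.mem_range.2 (Nat.lt_succ_of_lt h)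
      have h3 : Y k' ω < Y j ω := hjgt k' hk'small
      have h4 : Y j ω ≤ Y k' ω := by
        rw [← hk']
        exact Finset.le_sup' (fun k => Y k ω) (Finset.mem_range.2 (Nat.lt_succ_of_le h2))
      linarith
    exact ⟨k', hmk', hk'n, hbk'⟩
  -- measures agree
  have hNzero : P Nrec = 0 :=
    aux_record P F Y hFmono hY hindep hident hdf hnoatom
  have hPeq : P A = P T := by
    apply measure_congr
    rw [ae_eq_set]
    constructor
    · exact measure_mono_null hAT hNzero
    · rw [diff_eq_empty.2 hTA, measure_empty]
  rw [hPeq]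
  exact measure_zero_or_one_of_measurableSet_limsup_atTop hle hindep.iIndep hTtail
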